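/- Let {R,F} be a compatible pair of Yang–Baxter matrices on V = ℂ^N, ε ∈ {1,−1}, and let α_ε(M) be the matrix over End(V₀) with entries (α_ε(M)^a_b)^i_j = (R^εF)^{ia}_{jb}. Then for every j ≥ 1 the image of the string M_{1̄}M_{2̄}⋯M_{\bar j} under α_ε, viewed as an operator on V₀⊗V₁⊗⋯⊗V_j, equals R₀^ε R₁^ε ⋯ R^ε_{j−1} · F_{j−1}⋯F₁F₀, where R_i (resp. F_i) acts on the tensor factors labelled i and i+1. -/

import Mathlib

open Matrix BigOperators
open scoped Classical

noncomputable section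

/-- Operators on `V^{⊗n}`, `V = ℂ^N`, with entries in `A`. -/
abbrev Op (N n : ℕ) (A : Type*) := Matrix (Fin n → Fin N) (Fin n → Fin N) A

variable {N : ℕ}

/-- Embedding of a two-site operator at tensor factors `i`, `j` (identity elsewhere). -/
def emb2 {A : Type*} [Semiring A] {n : ℕ} (i j : Fin n) (X : Op N 2 A) : Op N n A :=
  fun f g => if ∀ k, k ≠ i → k ≠ j → f k = g k then X ![f i, f j] ![g i, g j] else 0

/-- `X_p`: a two-site operator acting at the adjacent factors `p`, `p+1` (0-based). -/
def opAt {A : Type*} [Semiring A] (n p : ℕ) (X : Op N 2 A) : Op N n A :=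
  if h : p + 1 < n then emb2 ⟨p, Nat.lt_of_succ_lt h⟩ ⟨p + 1, h⟩ X else 1

/-- Embedding of a one-site operator at tensor factor `i`. -/
def emb1 {A : Type*} [Semiring A] {n : ℕ} (i : Fin n) (Z : Matrix (Fin N) (Fin N) A) :
    Op N n A :=
  fun f g => if ∀ k, k ≠ i → f k = g k then Z (f i) (g i) else 0

/-- `Z_p`: a one-site operator acting at factor `p` (0-based). -/
def matAt {A : Type*} [Semiring A] (n p : ℕ) (Z : Matrix (Fin N) (Fin N) A) : Op N n A :=
  if h : p < n then emb1 ⟨p, h⟩ Z else 1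

/-- Partial trace over the factors in `S`, re-embedded with identity on the factors in `S`. -/
def ptr {A : Type*} [Semiring A] {n : ℕ} (S : Finset (Fin n)) (X : Op N n A) : Op N n A :=
  fun f g =>
    if ∀ k ∈ S, f k = g k then
      ∑ h : Fin n → Fin N,
        if ∀ k, k ∉ S → h k = f k then X h (fun k => if k ∈ S then h k else g k) else 0
    else 0

/-- Full trace. -/
def trAll {A : Type*} [Semiring A] {n : ℕ} (X : Op N n A) : A := ∑ f, X f f

/-- Trace over all tensor factors except the factor `0`, yielding an `N×N` matrix. -/
def trRest {n : ℕ} (X : Op N (n + 1) ℂ) : Matrix (Fin N) (Fin N) ℂ :=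
  fun a b => ∑ f : Fin n → Fin N, X (Fin.cons a f) (Fin.cons b f)

/-- The permutation (flip) operator on `V ⊗ V`. -/
def flipP (N : ℕ) : Op N 2 ℂ := fun f g => if f 0 = g 1 ∧ f 1 = g 0 then 1 else 0

/-- `D_R = Tr_(2) Ψ_R`. -/
def Dmat (Ψ : Op N 2 ℂ) : Matrix (Fin N) (Fin N) ℂ := fun a b => ∑ c, Ψ ![a, c] ![b, c]

/-- The product `∏_{k ∈ S} (Dm)_k` of copies of a one-site operator over the factors in `S`. -/
def Dset {n : ℕ} (Dm : Matrix (Fin N) (Fin N) ℂ) (S : Finset (Fin n)) : Op N n ℂ :=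
  fun f g => if ∀ k, k ∉ S → f k = g k then ∏ k ∈ S, Dm (f k) (g k) else 0

/-- `R` is an (invertible) Yang-Baxter matrix. -/
def IsYB (R : Op N 2 ℂ) : Prop :=
  IsUnit R ∧
    opAt 3 0 R * opAt 3 1 R * opAt 3 0 R = opAt 3 1 R * opAt 3 0 R * opAt 3 1 R

/-- `Ψ` is a skew inverse of `R`:  `Tr_(2) R₁ Ψ₂ = Tr_(2) Ψ₁ R₂ = P`. -/
def IsSkewPair (R Ψ : Op N 2 ℂ) : Prop :=
  ptr {1} (opAt 3 0 R * opAt 3 1 Ψ) = emb2 (0 : Fin 3) (2 : Fin 3) (flipP N) ∧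
  ptr {1} (opAt 3 0 Ψ * opAt 3 1 R) = emb2 (0 : Fin 3) (2 : Fin 3) (flipP N)

/-- q-number `(i)_q`. -/
def qnum (q : ℂ) (i : ℕ) : ℂ := (q ^ i - q⁻¹ ^ i) / (q - q⁻¹)

/-- `η = (q−μ)(q⁻¹+μ)/(μ(q−q⁻¹))`. -/
def etaC (q μ : ℂ) : ℂ := (q - μ) * (q⁻¹ + μ) / (μ * (q - q⁻¹))

/-- `K = (q·Id − R)(q⁻¹·Id + R)/(μ(q−q⁻¹))`. -/
def Kmat (q μ : ℂ) (R : Op N 2 ℂ) : Op N 2 ℂ :=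
  (μ * (q - q⁻¹))⁻¹ • ((q • (1 : Op N 2 ℂ) - R) * (q⁻¹ • (1 : Op N 2 ℂ) + R))

/-- Baxterized element `R⁻(x)`. -/
def Rminus (q μ : ℂ) (R : Op N 2 ℂ) (x : ℂ) : Op N 2 ℂ :=
  (1 : Op N 2 ℂ) + ((x - 1) / (q - q⁻¹)) • R + (μ * (x - 1) / (μ + q * x)) • Kmat q μ R

/-- Base conditions on the parameters `q`, `μ`. -/
def ParamOK (q μ : ℂ) : Prop :=
  q ≠ 0 ∧ q ≠ 1 ∧ q ≠ -1 ∧ μ ≠ 0 ∧ μ ≠ q ∧ μ ≠ -q⁻¹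

/-- Conditions `q^{2j} ≠ 1`, `μ ≠ −q^{−2j+3}` for `j = 2, …, k`. -/
def ParamRange (q μ : ℂ) (k : ℕ) : Prop :=
  ∀ j, 2 ≤ j → j ≤ k → q ^ (2 * j) ≠ 1 ∧ μ ≠ -q ^ (3 - 2 * (j : ℤ))

/-- `R` (with inverse `Rinv`) is a BMW-type Yang-Baxter matrix with parameters `q, μ`. -/
def IsBMW (q μ : ℂ) (R Rinv : Op N 2 ℂ) : Prop :=
  R * Rinv = 1 ∧ Rinv * R = 1 ∧
  R * Kmat q μ R = μ • Kmat q μ R ∧ Kmat q μ R * R = μ • Kmat q μ R ∧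
  Kmat q μ R * Kmat q μ R = etaC q μ • Kmat q μ R ∧
  (opAt 3 0 (Kmat q μ R) * opAt 3 1 (Kmat q μ R) * opAt 3 0 (Kmat q μ R)
      = opAt 3 0 (Kmat q μ R)) ∧
  (opAt 3 1 (Kmat q μ R) * opAt 3 0 (Kmat q μ R) * opAt 3 1 (Kmat q μ R)
      = opAt 3 1 (Kmat q μ R)) ∧
  ∀ E E' : Op N 2 ℂ, (E = R ∧ E' = Rinv) ∨ (E = Rinv ∧ E' = R) →
    (opAt 3 0 (Kmat q μ R) * opAt 3 1 E
        = opAt 3 0 (Kmat q μ R) * opAt 3 1 (Kmat q μ R) * opAt 3 0 E' ∧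
     opAt 3 1 (Kmat q μ R) * opAt 3 0 E
        = opAt 3 1 (Kmat q μ R) * opAt 3 0 (Kmat q μ R) * opAt 3 1 E' ∧
     opAt 3 1 E * opAt 3 0 (Kmat q μ R)
        = opAt 3 0 E' * opAt 3 1 (Kmat q μ R) * opAt 3 0 (Kmat q μ R) ∧
     opAt 3 0 E * opAt 3 1 (Kmat q μ R)
        = opAt 3 1 E' * opAt 3 0 (Kmat q μ R) * opAt 3 1 (Kmat q μ R))

/-- q-antisymmetrizer `A^{(m)}` acting on the `m` factors starting at factor `p` (0-based)
of `V^{⊗n}`. -/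
def asym (q μ : ℂ) (R : Op N 2 ℂ) (n : ℕ) : ℕ → ℕ → Op N n ℂ
  | _, 0 => 1
  | _, 1 => 1
  | p, (m + 2) =>
      (q ^ (m + 1) / qnum q (m + 2)) •
        (asym q μ R n p (m + 1) * opAt n (p + m) (Rminus q μ R ((q ^ (2 * (m + 1)))⁻¹)) *
          asym q μ R n p (m + 1))

/-- The contractor `C^{(2i)}` acting on the `2i` factors starting at factor `p` (0-based)
of `V^{⊗n}`; `contr q μ R n p i = C^{(2i)}`. -/
def contr (q μ : ℂ) (R : Op N 2 ℂ) (n : ℕ) : ℕ → ℕ → Op N n ℂ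
  | _, 0 => 1
  | p, 1 => (etaC q μ)⁻¹ • opAt n p (Kmat q μ R)
  | p, (i + 2) =>
      contr q μ R n (p + 1) (i + 1) * opAt n p (Kmat q μ R) *
        opAt n (p + 2 * i + 2) (Kmat q μ R) * contr q μ R n (p + 1) (i + 1)

/-- `R` has height `k`. -/
def HasHeight (q μ : ℂ) (R : Op N 2 ℂ) (k : ℕ) : Prop :=
  2 ≤ k ∧ (∀ i, 2 ≤ i → i ≤ k → asym q μ R k 0 i ≠ 0) ∧
    asym q μ R (k + 1) 1 k * opAt (k + 1) 0 (Rminus q μ R ((q ^ (2 * k))⁻¹)) *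
      asym q μ R (k + 1) 1 k = 0

/-- `R` is of orthogonal type `O(k)`: BMW type, height `k`, `μ = q^{1−k}`, `rk A^{(k)} = 1`. -/
def IsOrth (q μ : ℂ) (R Rinv : Op N 2 ℂ) (k : ℕ) : Prop :=
  IsBMW q μ R Rinv ∧ HasHeight q μ R k ∧ μ = q ^ (1 - (k : ℤ)) ∧
    (asym q μ R k 0 k).rank = 1

/-- `{R,F}` is a compatible pair:  `R₁F₂F₁ = F₂F₁R₂` and `R₂F₁F₂ = F₁F₂R₁`. -/
def CompatPair (R F : Op N 2 ℂ) : Prop :=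
  opAt 3 0 R * opAt 3 1 F * opAt 3 0 F = opAt 3 1 F * opAt 3 0 F * opAt 3 1 R ∧
  opAt 3 1 R * opAt 3 0 F * opAt 3 1 F = opAt 3 0 F * opAt 3 1 F * opAt 3 0 R

/-- Push a numeric operator into an `A`-valued operator. -/
def toA {A : Type*} [Semiring A] [Algebra ℂ A] {n : ℕ} (X : Op N n ℂ) : Op N n A :=
  X.map (algebraMap ℂ A)

/-- The copies `M_{\bar{i+1}}` of a quantum matrix:  `Mbar F Finv M n i = M_{\overline{i+1}}`. -/
def Mbar {A : Type*} [Semiring A] [Algebra ℂ A] (F Finv : Op N 2 ℂ)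
    (M : Matrix (Fin N) (Fin N) A) (n : ℕ) : ℕ → Op N n A
  | 0 => matAt n 0 M
  | (i + 1) => toA (opAt n i F) * Mbar F Finv M n i * toA (opAt n i Finv)

/-- The string `M_{1̄} M_{2̄} ⋯ M_{j̄}`. -/
def Mstr {A : Type*} [Semiring A] [Algebra ℂ A] (F Finv : Op N 2 ℂ)
    (M : Matrix (Fin N) (Fin N) A) (n : ℕ) : ℕ → Op N n A
  | 0 => 1
  | (j + 1) => Mstr F Finv M n j * Mbar F Finv M n j

/-- `M` is a quantum matrix for the pair `{R,F}`. -/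
def IsQMatrix {A : Type*} [Semiring A] [Algebra ℂ A] (R F Finv : Op N 2 ℂ)
    (M : Matrix (Fin N) (Fin N) A) : Prop :=
  toA (opAt 2 0 R) * Mbar F Finv M 2 0 * Mbar F Finv M 2 1 =
    Mbar F Finv M 2 0 * Mbar F Finv M 2 1 * toA (opAt 2 0 R)

/-- The contraction `g = η⁻¹ Tr_{R(1,2)}(M_{1̄}M_{2̄}K₁)`. -/
def qContr (q μ : ℂ) (R F Finv : Op N 2 ℂ) (Dm : Matrix (Fin N) (Fin N) ℂ)
    {A : Type*} [Semiring A] [Algebra ℂ A] (M : Matrix (Fin N) (Fin N) A) : A :=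
  (etaC q μ)⁻¹ •
    trAll (toA (Dset Dm (Finset.univ : Finset (Fin 2))) *
      (Mstr F Finv M 2 2 * toA (opAt 2 0 (Kmat q μ R))))

/-- The elementary sums `e_i = Tr_{R(1,…,i)}(M_{1̄}⋯M_{ī} A^{(i)})`. -/
def elemSum (q μ : ℂ) (R F Finv : Op N 2 ℂ) (Dm : Matrix (Fin N) (Fin N) ℂ)
    {A : Type*} [Semiring A] [Algebra ℂ A] (M : Matrix (Fin N) (Fin N) A) (i : ℕ) : A :=
  trAll (toA (Dset Dm (Finset.univ : Finset (Fin i))) *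
    (Mstr F Finv M i i * toA (asym q μ R i 0 i)))

/-- The increasing string `F₁F₂⋯F_j` (1-based), i.e. positions `0,…,j-1`. -/
def Fstr (n : ℕ) (F : Op N 2 ℂ) : ℕ → Op N n ℂ
  | 0 => 1
  | (j + 1) => Fstr n F j * opAt n j F

/-- The decreasing string `F_j⋯F₂F₁` (1-based), i.e. positions `j-1,…,0`. -/
def FstrDown (n : ℕ) (F : Op N 2 ℂ) : ℕ → Op N n ℂ
  | 0 => 1
  | (j + 1) => opAt n j F * FstrDown n F j

/-- The operator `O`. -/
def Oop (q μ : ℂ) (R Finv : Op N 2 ℂ) (k : ℕ) : Matrix (Fin N) (Fin N) ℂ :=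
  (qnum q k * (1 + q ^ ((2 : ℤ) - (k : ℤ))) / (q + q ^ ((1 : ℤ) - (k : ℤ)))) •
    trRest (asym q μ R (k + 1) 1 k * Fstr (k + 1) Finv k)

/-- The operator `O⁻¹`. -/
def OopInv (q μ : ℂ) (R F : Op N 2 ℂ) (k : ℕ) : Matrix (Fin N) (Fin N) ℂ :=
  (qnum q k * (1 + q ^ ((2 : ℤ) - (k : ℤ))) / (q + q ^ ((1 : ℤ) - (k : ℤ)))) •
    trRest (FstrDown (k + 1) F k * asym q μ R (k + 1) 1 k)

/-- The matrix `G`, `G₁ = Tr_(2,3)(K₂F₁⁻¹F₂⁻¹)`. -/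
def Gmat (q μ : ℂ) (R Finv : Op N 2 ℂ) : Matrix (Fin N) (Fin N) ℂ :=
  trRest (opAt 3 1 (Kmat q μ R) * opAt 3 0 Finv * opAt 3 1 Finv)

/-- The matrix `G⁻¹`, `(G⁻¹)₁ = Tr_(2,3)(F₂F₁K₂)`. -/
def GmatInv (q μ : ℂ) (R F : Op N 2 ℂ) : Matrix (Fin N) (Fin N) ℂ :=
  trRest (opAt 3 1 F * opAt 3 0 F * opAt 3 1 (Kmat q μ R))


/-- The matrix `α_ε(M)` over `End(V₀)` with entries `(α_ε(M)^a_b)^i_j = (R^εF)^{ia}_{jb}`. -/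
def alphaM {N : ℕ} (E F : Op N 2 ℂ) : Matrix (Fin N) (Fin N) (Matrix (Fin N) (Fin N) ℂ) :=
  fun a b => fun i j => (E * F) ![i, a] ![j, b]

/-- Identify an operator on `V₁⊗⋯⊗V_n` with entries in `End(V₀)` with an operator on
`V₀⊗V₁⊗⋯⊗V_n`. -/
def assemble {N n : ℕ} (X : Op N n (Matrix (Fin N) (Fin N) ℂ)) : Op N (n + 1) ℂ :=
  fun f g => X (fun t => f t.succ) (fun t => g t.succ) (f 0) (g 0)

section AuxLemmas
variable {N : ℕ}

/-- Embedding along an injection of tensor factors. -/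
def embI {a n : ℕ} (σ : Fin a → Fin n) (X : Op N a ℂ) : Op N n ℂ :=
  fun f g => if ∀ k, (∀ t, σ t ≠ k) → f k = g k then X (f ∘ σ) (g ∘ σ) else 0

/-- extension of `u : Fin a → Fin N` along `σ`, with default `f` off range. -/
def extFn {a n : ℕ} (σ : Fin a → Fin n) (f : Fin n → Fin N) (u : Fin a → Fin N) :
    Fin n → Fin N :=
  fun k => if h : ∃ t, σ t = k then u h.choose else f k

lemma extFn_comp {a n : ℕ} {σ : Fin a → Fin n} (hσ : Function.Injective σ)
    (f : Fin n → Fin N) (u : Fin a → Fin N) : extFn σ f u ∘ σ = u := by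
  funext t
  have h : ∃ s, σ s = σ t := ⟨t, rfl⟩
  simp only [Function.comp, extFn, dif_pos h]
  exact congrArg u (hσ h.choose_spec)

lemma extFn_off {a n : ℕ} (σ : Fin a → Fin n) (f : Fin n → Fin N) (u : Fin a → Fin N)
    (k : Fin n) (hk : ∀ t, σ t ≠ k) : extFn σ f u k = f k := by
  simp only [extFn]
  rw [dif_neg]
  rintro ⟨t, ht⟩; exact hk t ht

lemma extFn_eq {a n : ℕ} (σ : Fin a → Fin n) (f h : Fin n → Fin N)
    (hh : ∀ k, (∀ t, σ t ≠ k) → h k = f k) : extFn σ f (h ∘ σ) = h := by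
  funext k
  by_cases hk : ∃ t, σ t = k
  · simp only [extFn, dif_pos hk, Function.comp]
    rw [hk.choose_spec]
  · push_neg at hk
    rw [extFn_off σ f _ k hk, hh k hk]

lemma sum_ext {a n : ℕ} (σ : Fin a → Fin n) (hσ : Function.Injective σ)
    (f : Fin n → Fin N) (G : (Fin a → Fin N) → ℂ) :
    (∑ h : Fin n → Fin N,
      if ∀ k, (∀ t, σ t ≠ k) → h k = f k then G (h ∘ σ) else 0)
      = ∑ u : Fin a → Fin N, G u := by
  rw [← Finset.sum_filter]
  refine Finset.sum_nbij' (fun h => h ∘ σ) (fun u => extFn σ f u) ?_ ?_ ?_ ?_ ?_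
  · intro h _; exact Finset.mem_univ _
  · intro u _
    simp only [Finset.mem_filter, Finset.mem_univ, true_and]
    intro k hk; exact extFn_off σ f u k hk
  · intro h hh
    simp only [Finset.mem_filter, Finset.mem_univ, true_and] at hh
    exact extFn_eq σ f h hh
  · intro u _; exact extFn_comp hσ f u
  · intro h _; rfl

lemma embI_mul {a n : ℕ} {σ : Fin a → Fin n} (hσ : Function.Injective σ)
    (X Y : Op N a ℂ) : embI σ (X * Y) = embI σ X * embI σ Y := by
  funext f g
  by_cases C : ∀ k, (∀ t, σ t ≠ k) → f k = g k
  · have : (embI σ X * embI σ Y) f g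
        = ∑ h : Fin n → Fin N,
            if ∀ k, (∀ t, σ t ≠ k) → h k = f k
              then X (f ∘ σ) (h ∘ σ) * Y (h ∘ σ) (g ∘ σ) else 0 := by
      rw [Matrix.mul_apply]
      refine Finset.sum_congr rfl ?_
      intro h _
      simp only [embI]
      by_cases P : ∀ k, (∀ t, σ t ≠ k) → h k = f k
      · have P' : ∀ k, (∀ t, σ t ≠ k) → h k = g k := fun k hk => (P k hk).trans (C k hk)
        have P'' : ∀ k, (∀ t, σ t ≠ k) → f k = h k := fun k hk => (P k hk).symm
        rw [if_pos P'', if_pos P', if_pos P]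
      · have P' : ¬ ∀ k, (∀ t, σ t ≠ k) → f k = h k := by
          intro hc; exact P fun k hk => (hc k hk).symm
        rw [if_neg P', if_neg P, zero_mul]
    rw [this, sum_ext σ hσ f (fun u => X (f ∘ σ) u * Y u (g ∘ σ))]
    simp only [embI, if_pos C, Matrix.mul_apply]
  · simp only [embI, if_neg C]
    symm
    rw [Matrix.mul_apply]
    refine Finset.sum_eq_zero ?_
    intro h _
    simp only [embI]
    by_cases P : ∀ k, (∀ t, σ t ≠ k) → f k = h k
    · have P' : ¬ ∀ k, (∀ t, σ t ≠ k) → h k = g k := by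
        intro hc; exact C fun k hk => (P k hk).trans (hc k hk)
      rw [if_neg P', mul_zero]
    · rw [if_neg P, zero_mul]

lemma embI_one {a n : ℕ} {σ : Fin a → Fin n} (hσ : Function.Injective σ) :
    embI σ (1 : Op N a ℂ) = 1 := by
  funext f g
  simp only [embI, Matrix.one_apply]
  by_cases C : ∀ k, (∀ t, σ t ≠ k) → f k = g k
  · rw [if_pos C]
    by_cases h : f ∘ σ = g ∘ σ
    · rw [if_pos h, if_pos]
      funext k
      by_cases hk : ∃ t, σ t = k
      · obtain ⟨t, rfl⟩ := hk; exact congrFun h t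
      · push_neg at hk; exact C k hk
    · rw [if_neg h, if_neg]
      intro hc; exact h (by rw [hc])
  · rw [if_neg C, if_neg]
    intro hc; exact C (by rw [hc]; intro _ _; rfl)

lemma embI_comp {a b n : ℕ} {σ : Fin b → Fin n} {τ : Fin a → Fin b}
    (hσ : Function.Injective σ) (X : Op N a ℂ) :
    embI σ (embI τ X) = embI (σ ∘ τ) X := by
  funext f g
  simp only [embI, Function.comp]
  by_cases C : ∀ k, (∀ t, σ (τ t) ≠ k) → f k = g k
  · rw [if_pos C]
    have C1 : ∀ k, (∀ t, σ t ≠ k) → f k = g k := by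
      intro k hk; exact C k (fun t => hk (τ t))
    have C2 : ∀ s, (∀ t, τ t ≠ s) → f (σ s) = g (σ s) := by
      intro s hs
      exact C (σ s) (fun t ht => hs t (hσ ht))
    rw [if_pos C1, if_pos C2]
    rfl
  · by_cases C1 : ∀ k, (∀ t, σ t ≠ k) → f k = g k
    · rw [if_pos C1, if_neg C, if_neg]
      intro C2
      apply C
      intro k hk
      by_cases hk2 : ∃ s, σ s = k
      · obtain ⟨s, rfl⟩ := hk2
        exact C2 s (fun t ht => hk t (by rw [ht]))
      · push_neg at hk2; exact C1 k hk2
    · rw [if_neg C1, if_neg C]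
lemma embI_mul_disjoint {a b n : ℕ} {σ : Fin a → Fin n} {τ : Fin b → Fin n}
    (hdisj : ∀ s t, σ s ≠ τ t) (X : Op N a ℂ) (Y : Op N b ℂ) :
    embI σ X * embI τ Y =
      fun f g => if ∀ k, (∀ t, σ t ≠ k) → (∀ t, τ t ≠ k) → f k = g k
        then X (f ∘ σ) (g ∘ σ) * Y (f ∘ τ) (g ∘ τ) else 0 := by
  funext f g
  rw [Matrix.mul_apply]
  set h₀ : Fin n → Fin N := fun k => if ∃ s, σ s = k then g k else f k with hh₀
  have h₀σ : h₀ ∘ σ = g ∘ σ := by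
    funext s; simp only [hh₀, Function.comp]; rw [if_pos ⟨s, rfl⟩]
  have h₀τ : h₀ ∘ τ = f ∘ τ := by
    funext t; simp only [hh₀, Function.comp]
    rw [if_neg]; rintro ⟨s, hs⟩; exact hdisj s t hs
  rw [Finset.sum_eq_single h₀]
  · simp only [embI]
    have P1 : ∀ k, (∀ t, σ t ≠ k) → f k = h₀ k := by
      intro k hk
      simp only [hh₀]
      rw [if_neg]; rintro ⟨s, hs⟩; exact hk s hs
    rw [if_pos P1, h₀σ, h₀τ]
    by_cases C : ∀ k, (∀ t, σ t ≠ k) → (∀ t, τ t ≠ k) → f k = g k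
    · rw [if_pos C, if_pos]
      intro k hk
      simp only [hh₀]
      by_cases hk2 : ∃ s, σ s = k
      · rw [if_pos hk2]
      · push_neg at hk2
        rw [if_neg (by push_neg; exact hk2)]
        exact C k hk2 hk
    · rw [if_neg C, if_neg, mul_zero]
      intro P2
      apply C
      intro k hk1 hk2
      have := P2 k hk2
      simp only [hh₀] at this
      rw [if_neg (by push_neg; exact hk1)] at this
      exact this
  · intro h _ hne
    simp only [embI]
    by_cases P1 : ∀ k, (∀ t, σ t ≠ k) → f k = h k
    · by_cases P2 : ∀ k, (∀ t, τ t ≠ k) → h k = g k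
      · exfalso
        apply hne
        funext k
        simp only [hh₀]
        by_cases hk : ∃ s, σ s = k
        · obtain ⟨s, rfl⟩ := hk
          rw [if_pos ⟨s, rfl⟩]
          exact P2 (σ s) (fun t ht => hdisj s t ht.symm)
        · push_neg at hk
          rw [if_neg (by push_neg; exact hk)]
          exact (P1 k hk).symm
      · rw [if_neg P2, mul_zero]
    · rw [if_neg P1, zero_mul]
  · intro h; exact absurd (Finset.mem_univ h₀) h

lemma embI_comm_disjoint {a b n : ℕ} {σ : Fin a → Fin n} {τ : Fin b → Fin n}
    (hdisj : ∀ s t, σ s ≠ τ t) (X : Op N a ℂ) (Y : Op N b ℂ) :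
    embI σ X * embI τ Y = embI τ Y * embI σ X := by
  rw [embI_mul_disjoint hdisj, embI_mul_disjoint (fun t s => (hdisj s t).symm)]
  funext f g
  by_cases C : ∀ k, (∀ t, σ t ≠ k) → (∀ t, τ t ≠ k) → f k = g k
  · have C' : ∀ k, (∀ t, τ t ≠ k) → (∀ t, σ t ≠ k) → f k = g k :=
      fun k h1 h2 => C k h2 h1
    rw [if_pos C, if_pos C', mul_comm]
  · have C' : ¬ ∀ k, (∀ t, τ t ≠ k) → (∀ t, σ t ≠ k) → f k = g k := by
      intro hc; exact C fun k h1 h2 => hc k h2 h1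
    rw [if_neg C, if_neg C']
lemma emb2_eq_embI {n : ℕ} (i j : Fin n) (X : Op N 2 ℂ) :
    emb2 i j X = embI ![i, j] X := by
  funext f g
  simp only [emb2, embI]
  have harg : ∀ h : Fin n → Fin N, h ∘ ![i, j] = ![h i, h j] := by
    intro h; funext t; fin_cases t <;> rfl
  rw [harg f, harg g]
  have hcond : (∀ k, k ≠ i → k ≠ j → f k = g k) ↔
      (∀ k, (∀ t : Fin 2, ![i, j] t ≠ k) → f k = g k) := by
    constructor
    · intro h k hk
      exact h k (fun hc => hk 0 (by simp [hc])) (fun hc => hk 1 (by simp [hc]))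
    · intro h k h1 h2
      refine h k ?_
      intro t; fin_cases t <;> simp [Ne, eq_comm] <;> [exact fun hc => h1 hc.symm;
        exact fun hc => h2 hc.symm]
  by_cases C : ∀ k, k ≠ i → k ≠ j → f k = g k
  · rw [if_pos C, if_pos (hcond.mp C)]
  · rw [if_neg C, if_neg (fun hc => C (hcond.mpr hc))]

def pairFn (n p : ℕ) (h : p + 1 < n) : Fin 2 → Fin n :=
  ![⟨p, Nat.lt_of_succ_lt h⟩, ⟨p + 1, h⟩]

lemma pairFn_inj {n p : ℕ} (h : p + 1 < n) : Function.Injective (pairFn n p h) := by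
  intro s t hst
  fin_cases s <;> fin_cases t <;> simp_all [pairFn, Fin.ext_iff]

lemma opAt_eq_embI {n p : ℕ} (h : p + 1 < n) (X : Op N 2 ℂ) :
    opAt n p X = embI (pairFn n p h) X := by
  rw [opAt, dif_pos h]
  exact emb2_eq_embI _ _ X

lemma opAt_mul {n p : ℕ} (X Y : Op N 2 ℂ) :
    opAt (N := N) n p (X * Y) = opAt n p X * opAt n p Y := by
  by_cases h : p + 1 < n
  · rw [opAt_eq_embI h, opAt_eq_embI h, opAt_eq_embI h, embI_mul (pairFn_inj h)]
  · simp only [opAt, dif_neg h, one_mul]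

lemma opAt_one {n p : ℕ} : opAt (N := N) n p (1 : Op N 2 ℂ) = 1 := by
  by_cases h : p + 1 < n
  · rw [opAt_eq_embI h, embI_one (pairFn_inj h)]
  · simp only [opAt, dif_neg h]

lemma opAt_comm {n p q : ℕ} (hpq : p + 2 ≤ q) (X Y : Op N 2 ℂ) :
    opAt (N := N) n p X * opAt n q Y = opAt n q Y * opAt n p X := by
  by_cases hq : q + 1 < n
  · have hp : p + 1 < n := by omega
    rw [opAt_eq_embI hp, opAt_eq_embI hq]
    refine embI_comm_disjoint ?_ X Y
    intro s t
    fin_cases s <;> fin_cases t <;> simp [pairFn, Fin.ext_iff] <;> omega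
  · simp only [opAt, dif_neg hq, one_mul, mul_one]

def win3 (n p : ℕ) (h : p + 3 ≤ n) : Fin 3 → Fin n :=
  fun t => ⟨p + t, by omega⟩

lemma win3_inj {n p : ℕ} (h : p + 3 ≤ n) : Function.Injective (win3 n p h) := by
  intro s t hst
  simp only [win3, Fin.mk.injEq] at hst
  exact Fin.ext (by omega)

lemma win3_opAt0 {n p : ℕ} (h : p + 3 ≤ n) (X : Op N 2 ℂ) :
    embI (win3 n p h) (opAt 3 0 X) = opAt n p X := by
  have h0 : (0 : ℕ) + 1 < 3 := by norm_num
  have hp : p + 1 < n := by omega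
  rw [opAt_eq_embI h0, embI_comp (win3_inj h), opAt_eq_embI hp]
  have : win3 n p h ∘ pairFn 3 0 h0 = pairFn n p hp := by
    funext t
    fin_cases t <;> simp [win3, pairFn, Function.comp, Fin.ext_iff]
  rw [this]

lemma win3_opAt1 {n p : ℕ} (h : p + 3 ≤ n) (X : Op N 2 ℂ) :
    embI (win3 n p h) (opAt 3 1 X) = opAt n (p + 1) X := by
  have h0 : (1 : ℕ) + 1 < 3 := by norm_num
  have hp : p + 1 + 1 < n := by omega
  rw [opAt_eq_embI h0, embI_comp (win3_inj h), opAt_eq_embI hp]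
  have : win3 n p h ∘ pairFn 3 1 h0 = pairFn n (p + 1) hp := by
    funext t
    fin_cases t <;> simp [win3, pairFn, Function.comp, Fin.ext_iff]
  rw [this]

/-- Transfer a three-site relation to positions `p, p+1`. -/
lemma rel3_transfer {n p : ℕ} (h : p + 3 ≤ n)
    {X Y Z X' Y' Z' : Op N 2 ℂ}
    (hyp : opAt 3 0 X * opAt 3 1 Y * opAt 3 0 Z
      = opAt 3 1 X' * opAt 3 0 Y' * opAt 3 1 Z') :
    opAt n p X * opAt n (p + 1) Y * opAt n p Z
      = opAt n (p + 1) X' * opAt n p Y' * opAt n (p + 1) Z' := by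
  have := congrArg (embI (win3 n p h)) hyp
  rwa [embI_mul (win3_inj h), embI_mul (win3_inj h), embI_mul (win3_inj h),
    embI_mul (win3_inj h), win3_opAt0, win3_opAt1, win3_opAt0, win3_opAt1,
    win3_opAt0, win3_opAt1] at this

lemma assemble_mul {n : ℕ} (X Y : Op N n (Matrix (Fin N) (Fin N) ℂ)) :
    assemble (X * Y) = assemble X * assemble Y := by
  funext f g
  have L : assemble (X * Y) f g = ∑ h : Fin n → Fin N, ∑ c : Fin N,
      X (fun t => f t.succ) h (f 0) c * Y h (fun t => g t.succ) c (g 0) := by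
    simp only [assemble]
    rw [Matrix.mul_apply, Matrix.sum_apply]
    refine Finset.sum_congr rfl ?_
    intro h _
    rw [Matrix.mul_apply]
  have R : (assemble X * assemble Y) f g = ∑ c : Fin N, ∑ h : Fin n → Fin N,
      X (fun t => f t.succ) h (f 0) c * Y h (fun t => g t.succ) c (g 0) := by
    rw [Matrix.mul_apply,
      ← Equiv.sum_comp (Fin.consEquiv (fun _ : Fin (n + 1) => Fin N))
        (fun H => assemble X f H * assemble Y H g),
      Fintype.sum_prod_type]
    refine Finset.sum_congr rfl ?_
    intro c _
    refine Finset.sum_congr rfl ?_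
    intro h _
    simp only [assemble, Fin.consEquiv_apply, Fin.cons_zero, Fin.cons_succ]
  rw [L, R, Finset.sum_comm]

lemma assemble_one {n : ℕ} :
    assemble (1 : Op N n (Matrix (Fin N) (Fin N) ℂ)) = 1 := by
  funext f g
  simp only [assemble]
  rw [Matrix.one_apply, Matrix.one_apply]
  by_cases h : (fun t : Fin n => f t.succ) = (fun t => g t.succ)
  · rw [if_pos h, Matrix.one_apply]
    by_cases h0 : f 0 = g 0
    · rw [if_pos h0, if_pos]
      funext k
      exact Fin.cases h0 (fun i => congrFun h i) k
    · rw [if_neg h0, if_neg]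
      intro hc; exact h0 (congrFun hc 0)
  · rw [if_neg h, if_neg, Matrix.zero_apply]
    intro hc; exact h (by rw [hc])

lemma assemble_toA {n : ℕ} (Z : Op N n ℂ) :
    assemble (toA Z : Op N n (Matrix (Fin N) (Fin N) ℂ)) = embI Fin.succ Z := by
  funext f g
  simp only [assemble, toA, embI, Matrix.map_apply, Algebra.algebraMap_eq_smul_one,
    Matrix.smul_apply, Matrix.one_apply, smul_eq_mul]
  have hcond : (∀ k : Fin (n + 1), (∀ t : Fin n, Fin.succ t ≠ k) → f k = g k) ↔ f 0 = g 0 := by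
    constructor
    · intro h; exact h 0 (fun t => Fin.succ_ne_zero t)
    · intro h k
      exact Fin.cases (fun _ => h) (fun i hi => absurd rfl (hi i)) k
  by_cases h0 : f 0 = g 0
  · rw [if_pos h0, if_pos (hcond.mpr h0), mul_one]
    rfl
  · rw [if_neg h0, if_neg (fun hc => h0 (hcond.mp hc)), mul_zero]

lemma succ_comp_pairFn {n p : ℕ} (h : p + 1 < n) (h' : p + 2 < n + 1) :
    Fin.succ ∘ pairFn n p h = pairFn (n + 1) (p + 1) h' := by
  funext t
  fin_cases t <;> simp [pairFn, Function.comp, Fin.ext_iff, Fin.succ]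

lemma shift_opAt {n p : ℕ} (X : Op N 2 ℂ) :
    embI Fin.succ (opAt n p X) = opAt (n + 1) (p + 1) X := by
  by_cases h : p + 1 < n
  · have h' : p + 2 < n + 1 := by omega
    rw [opAt_eq_embI h, embI_comp (Fin.succ_injective n) X,
      succ_comp_pairFn h h', opAt_eq_embI h']
  · rw [opAt, dif_neg h, opAt, dif_neg (by omega), embI_one (Fin.succ_injective n)]
/-- The assembled copy `F_i⋯F_1 (E F)_0 F⁻¹_1⋯F⁻¹_i`. -/
def Abar (E F Finv : Op N 2 ℂ) (m : ℕ) : ℕ → Op N m ℂ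
  | 0 => opAt m 0 E * opAt m 0 F
  | (i + 1) => opAt m (i + 1) F * Abar E F Finv m i * opAt m (i + 1) Finv

lemma assemble_matAt0 {n : ℕ} (hn : 1 ≤ n) (E F : Op N 2 ℂ) :
    assemble (matAt n 0 (alphaM E F)) = opAt (n + 1) 0 (E * F) := by
  have h0 : 0 < n := hn
  have h1 : 0 + 1 < n + 1 := by omega
  have e0 : (0 : Fin (n + 1)) = ⟨0, by omega⟩ := rfl
  have e1 : Fin.succ (⟨0, h0⟩ : Fin n) = ⟨0 + 1, h1⟩ := rfl
  funext f g
  simp only [assemble, matAt, dif_pos h0, emb1, opAt, dif_pos h1, emb2]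
  have hcond : (∀ k : Fin n, k ≠ ⟨0, h0⟩ → f k.succ = g k.succ) ↔
      (∀ k : Fin (n + 1), k ≠ ⟨0, Nat.lt_of_succ_lt h1⟩ → k ≠ ⟨0 + 1, h1⟩ → f k = g k) := by
    constructor
    · intro h k
      refine Fin.cases ?_ ?_ k
      · intro hk _
        exact absurd (by rw [e0]) hk
      · intro i _ hi
        refine h i ?_
        intro hc
        rw [hc, e1] at hi
        exact hi rfl
    · intro h i hi
      refine h i.succ (by rw [← e0]; exact Fin.succ_ne_zero i) ?_
      rw [← e1]
      intro hc
      exact hi (Fin.succ_injective _ hc)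
  by_cases C : ∀ k : Fin n, k ≠ ⟨0, h0⟩ → f k.succ = g k.succ
  · rw [if_pos C, if_pos (hcond.mp C)]
    simp only [alphaM]
    have v1 : ![f 0, f (Fin.succ ⟨0, h0⟩)] = ![f ⟨0, Nat.lt_of_succ_lt h1⟩, f ⟨0 + 1, h1⟩] := by
      rw [e0, e1]
    have v2 : ![g 0, g (Fin.succ ⟨0, h0⟩)] = ![g ⟨0, Nat.lt_of_succ_lt h1⟩, g ⟨0 + 1, h1⟩] := by
      rw [e0, e1]
    rw [← v1, ← v2]
  · rw [if_neg C, if_neg (fun hc => C (hcond.mpr hc)), Matrix.zero_apply]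

lemma assemble_Mbar {n : ℕ} (hn : 1 ≤ n) (E F Finv : Op N 2 ℂ) :
    ∀ i, assemble (Mbar F Finv (alphaM E F) n i) = Abar E F Finv (n + 1) i := by
  intro i
  induction i with
  | zero =>
      show assemble (matAt n 0 (alphaM E F)) = Abar E F Finv (n + 1) 0
      rw [assemble_matAt0 hn, Abar, opAt_mul]
  | succ i ih =>
      show assemble (toA (opAt n i F) * Mbar F Finv (alphaM E F) n i * toA (opAt n i Finv)) = _
      rw [assemble_mul, assemble_mul, assemble_toA, assemble_toA, ih, shift_opAt, shift_opAt]
      rfl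

lemma FstrDown_comm {m : ℕ} (F : Op N 2 ℂ) (Y : Op N 2 ℂ) :
    ∀ i q, i + 1 ≤ q → FstrDown m F i * opAt m q Y = opAt m q Y * FstrDown m F i := by
  intro i
  induction i with
  | zero => intro q _; show (1 : Op N m ℂ) * _ = _ * 1; rw [one_mul, mul_one]
  | succ i ih =>
      intro q hq
      show opAt m i F * FstrDown m F i * opAt m q Y = opAt m q Y * (opAt m i F * FstrDown m F i)
      rw [mul_assoc, ih q (by omega), ← mul_assoc, opAt_comm (by omega), mul_assoc]

lemma key_L {m : ℕ} (E F Finv : Op N 2 ℂ)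
    (hyb : opAt 3 0 F * opAt 3 1 F * opAt 3 0 F = opAt 3 1 F * opAt 3 0 F * opAt 3 1 F)
    (hcE : opAt 3 1 E * opAt 3 0 F * opAt 3 1 F = opAt 3 0 F * opAt 3 1 F * opAt 3 0 E)
    (hFF : F * Finv = 1) :
    ∀ i, i + 2 ≤ m →
      FstrDown m F i * Abar E F Finv m i = opAt m i E * FstrDown m F (i + 1) := by
  intro i
  induction i with
  | zero =>
      intro _
      simp only [FstrDown, Abar, one_mul, mul_one]
  | succ i ih =>
      intro hm
      have hm' : i + 3 ≤ m := by omega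
      have IH := ih (by omega)
      simp only [FstrDown, Abar] at IH ⊢
      set Fi := opAt m i F with hFi
      set Fi1 := opAt m (i + 1) F with hFi1
      set Gi1 := opAt m (i + 1) Finv with hGi1
      set Ei := opAt m i E with hEi
      set Ei1 := opAt m (i + 1) E with hEi1
      set D := FstrDown m F i with hD
      set Ab := Abar E F Finv m i with hAb
      have h1 : ∀ W : Op N m ℂ, D * (Fi1 * W) = Fi1 * (D * W) := by
        intro W
        rw [← mul_assoc, FstrDown_comm F F i (i + 1) (by omega), mul_assoc]
      have h2 : D * Gi1 = Gi1 * D := FstrDown_comm F Finv i (i + 1) (by omega)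
      have t3 : Fi * Fi1 * Ei = Ei1 * Fi * Fi1 := rel3_transfer hm' hcE.symm
      have h3 : ∀ W : Op N m ℂ, Fi * (Fi1 * (Ei * W)) = Ei1 * (Fi * (Fi1 * W)) := by
        intro W
        simp only [← mul_assoc]
        rw [t3]
      have t4 : Fi * Fi1 * Fi = Fi1 * Fi * Fi1 := rel3_transfer hm' hyb
      have h4 : ∀ W : Op N m ℂ, Fi * (Fi1 * (Fi * W)) = Fi1 * (Fi * (Fi1 * W)) := by
        intro W
        simp only [← mul_assoc]
        rw [t4]
      have h5 : ∀ W : Op N m ℂ, Fi1 * (Gi1 * W) = W := by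
        intro W
        rw [← mul_assoc, hFi1, hGi1, ← opAt_mul, hFF, opAt_one, one_mul]
      have IH' : ∀ W : Op N m ℂ, D * (Ab * W) = Ei * (Fi * (D * W)) := by
        intro W
        simp only [← mul_assoc]
        rw [IH]
        simp only [mul_assoc]
      calc Fi * D * (Fi1 * Ab * Gi1)
          = Fi * (D * (Fi1 * (Ab * Gi1))) := by simp only [mul_assoc]
        _ = Fi * (Fi1 * (D * (Ab * Gi1))) := by rw [h1]
        _ = Fi * (Fi1 * (Ei * (Fi * (D * Gi1)))) := by rw [IH']
        _ = Fi * (Fi1 * (Ei * (Fi * (Gi1 * D)))) := by rw [h2]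
        _ = Ei1 * (Fi * (Fi1 * (Fi * (Gi1 * D)))) := by rw [h3]
        _ = Ei1 * (Fi1 * (Fi * (Fi1 * (Gi1 * D)))) := by rw [h4]
        _ = Ei1 * (Fi1 * (Fi * D)) := by rw [h5]

lemma main_Q {n : ℕ} (hn : 1 ≤ n) (E F Finv : Op N 2 ℂ)
    (hyb : opAt 3 0 F * opAt 3 1 F * opAt 3 0 F = opAt 3 1 F * opAt 3 0 F * opAt 3 1 F)
    (hcE : opAt 3 1 E * opAt 3 0 F * opAt 3 1 F = opAt 3 0 F * opAt 3 1 F * opAt 3 0 E)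
    (hFF : F * Finv = 1) :
    ∀ j, j ≤ n →
      assemble (Mstr F Finv (alphaM E F) n j) =
        Fstr (n + 1) E j * FstrDown (n + 1) F j := by
  intro j
  induction j with
  | zero =>
      intro _
      simp only [Mstr, Fstr, FstrDown, assemble_one, one_mul]
  | succ j ih =>
      intro hj
      simp only [Mstr]
      rw [assemble_mul, assemble_Mbar hn, ih (by omega)]
      have hL := key_L (m := n + 1) E F Finv hyb hcE hFF j (by omega)
      calc Fstr (n + 1) E j * FstrDown (n + 1) F j * Abar E F Finv (n + 1) j
          = Fstr (n + 1) E j * (FstrDown (n + 1) F j * Abar E F Finv (n + 1) j) := by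
            rw [mul_assoc]
        _ = Fstr (n + 1) E j * (opAt (n + 1) j E * FstrDown (n + 1) F (j + 1)) := by rw [hL]
        _ = Fstr (n + 1) E (j + 1) * FstrDown (n + 1) F (j + 1) := by
            simp only [Fstr, mul_assoc]
end AuxLemmas

/-- Lemma 4.20: the image of the string `M_{1̄}M_{2̄}⋯M_{j̄}` under the
representation `α_ε` equals `R₀^εR₁^ε⋯R^ε_{j−1}·F_{j−1}⋯F₁F₀` on `V₀⊗V₁⊗⋯⊗V_j`. -/
theorem alpha_image_of_string
    {N : ℕ} (R Rinv F Finv : Op N 2 ℂ)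
    (hRyb : IsYB R) (hFyb : IsYB F)
    (hR : R * Rinv = 1) (hR' : Rinv * R = 1)
    (hF : F * Finv = 1) (hF' : Finv * F = 1)
    (hcomp : CompatPair R F) :
    ∀ j : ℕ, 1 ≤ j → ∀ E : Op N 2 ℂ, E = R ∨ E = Rinv →
      assemble (Mstr F Finv (alphaM E F) j j) =
        Fstr (j + 1) E j * FstrDown (j + 1) F j := by
  intro j hj E hE
  have key : opAt 3 1 E * opAt 3 0 F * opAt 3 1 F = opAt 3 0 F * opAt 3 1 F * opAt 3 0 E := by
    rcases hE with h | h
    · subst h; exact hcomp.2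
    · subst h
      have hAiA : opAt 3 1 E * opAt 3 1 R = (1 : Op N 3 ℂ) := by
        rw [← opAt_mul, hR', opAt_one]
      have hCCi : opAt 3 0 R * opAt 3 0 E = (1 : Op N 3 ℂ) := by
        rw [← opAt_mul, hR, opAt_one]
      have hc2 := hcomp.2
      calc opAt 3 1 E * opAt 3 0 F * opAt 3 1 F
          = opAt 3 1 E * (opAt 3 0 F * opAt 3 1 F * (opAt 3 0 R * opAt 3 0 E)) := by
            rw [hCCi, mul_one, mul_assoc]
        _ = opAt 3 1 E * (opAt 3 1 R * opAt 3 0 F * opAt 3 1 F * opAt 3 0 E) := by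
            rw [← mul_assoc (opAt 3 0 F * opAt 3 1 F) (opAt 3 0 R) (opAt 3 0 E), ← hc2]
        _ = opAt 3 1 E * opAt 3 1 R *
              (opAt 3 0 F * (opAt 3 1 F * opAt 3 0 E)) := by
            simp only [mul_assoc]
        _ = opAt 3 0 F * opAt 3 1 F * opAt 3 0 E := by
            rw [hAiA, one_mul, mul_assoc]
  exact main_Q hj E F Finv hFyb.2 key hF j le_rfl

end
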